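/- Let H be a complex Hilbert space, G a selfadjoint continuous linear operator on H, and K : ℝ → (H →L[ℂ] H) a family of continuous linear operators with K(t) selfadjoint for each t, having derivative K'(κ) (in operator norm) at a point κ. Suppose β₁, β₂ : ℝ → ℝ and φ₁, φ₂ : ℝ → H are continuous on a neighborhood of κ, satisfy K(t)(φⱼ(t)) = βⱼ(t) • G(φⱼ(t)) for all t in that neighborhood, β₁(t) ≠ β₂(t) for all t ≠ κ in the neighborhood, β₁(κ) = β₂(κ), and β₂ and φ₂ are differentiable at κ. Then ⟪φ₁(κ), K'(κ)(φ₂(κ))⟫ = 0. -/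

import Mathlib

open scoped ComplexInnerProductSpace
open scoped Topology

/-- Vanishing of the off-diagonal matrix element `(φ₁(κ), K'(κ) φ₂(κ))` at a
crossing point `κ` of two real eigenvalue branches of the pencil
`K(x) φ = β G φ`. -/
theorem offdiagonal_matrix_element_vanishes_at_crossing
    {H : Type*} [NormedAddCommGroup H] [InnerProductSpace ℂ H] [CompleteSpace H]
    (G : H →L[ℂ] H) (hG : ∀ f g : H, ⟪G f, g⟫ = ⟪f, G g⟫)
    (K : ℝ → (H →L[ℂ] H)) (hKsa : ∀ t : ℝ, ∀ f g : H, ⟪K t f, g⟫ = ⟪f, K t g⟫)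
    (κ : ℝ) (K' : H →L[ℂ] H) (hK : HasDerivAt K K' κ)
    (β₁ β₂ : ℝ → ℝ) (φ₁ φ₂ : ℝ → H)
    (s : Set ℝ) (hs : s ∈ nhds κ)
    (hcβ₁ : ContinuousOn β₁ s) (hcβ₂ : ContinuousOn β₂ s)
    (hcφ₁ : ContinuousOn φ₁ s) (hcφ₂ : ContinuousOn φ₂ s)
    (heq₁ : ∀ t ∈ s, K t (φ₁ t) = ((β₁ t : ℂ)) • G (φ₁ t))
    (heq₂ : ∀ t ∈ s, K t (φ₂ t) = ((β₂ t : ℂ)) • G (φ₂ t))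
    (hne : ∀ t ∈ s, t ≠ κ → β₁ t ≠ β₂ t)
    (hcross : β₁ κ = β₂ κ)
    (hβ₂ : DifferentiableAt ℝ β₂ κ) (hφ₂ : DifferentiableAt ℝ φ₂ κ) :
    ⟪φ₁ κ, K' (φ₂ κ)⟫ = 0 := by
  have hκs : κ ∈ s := mem_of_mem_nhds hs
  -- Step 1: the G-matrix element vanishes at κ
  set h : ℝ → ℂ := fun t => ⟪φ₁ t, G (φ₂ t)⟫ with hh
  have hzero : ∀ t ∈ s, t ≠ κ → h t = 0 := by
    intro t ht htκ
    have e1 : ⟪φ₁ t, K t (φ₂ t)⟫ = (β₂ t : ℂ) * h t := by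
      rw [heq₂ t ht, inner_smul_right]
    have e2 : ⟪φ₁ t, K t (φ₂ t)⟫ = (β₁ t : ℂ) * h t := by
      rw [← hKsa t, heq₁ t ht, inner_smul_left, Complex.conj_ofReal, hG]
    have hsub : ((β₁ t : ℂ) - (β₂ t : ℂ)) * h t = 0 := by
      rw [sub_mul, ← e1, ← e2, sub_self]
    rcases mul_eq_zero.1 hsub with h1 | h1
    · exact absurd (by exact_mod_cast sub_eq_zero.1 h1) (hne t ht htκ)
    · exact h1
  have hcont : ContinuousOn h s := ContinuousOn.inner hcφ₁ (G.continuous.comp_continuousOn hcφ₂)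
  have h0 : h κ = 0 := by
    have hne' : (𝓝[s \ {κ}] κ).NeBot := by
      have : s \ {κ} = {κ}ᶜ ∩ s := by ext x; simp [Set.mem_diff, and_comm]
      rw [this, ← nhdsWithin_restrict' _ hs]
      exact inferInstanceAs (𝓝[≠] κ).NeBot
    have t1 : Filter.Tendsto h (𝓝[s \ {κ}] κ) (𝓝 (h κ)) :=
      ((hcont κ hκs).mono Set.diff_subset)
    have t2 : Filter.Tendsto h (𝓝[s \ {κ}] κ) (𝓝 0) := by
      refine Filter.Tendsto.congr' ?_ tendsto_const_nhds
      filter_upwards [self_mem_nhdsWithin] with t ht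
      exact (hzero t ht.1 ht.2).symm
    exact tendsto_nhds_unique t1 t2
  -- Step 2: derivatives
  have hv : HasDerivAt φ₂ (deriv φ₂ κ) κ := hφ₂.hasDerivAt
  set v := deriv φ₂ κ
  have hKr : HasDerivAt (fun t => (K t).restrictScalars ℝ) (K'.restrictScalars ℝ) κ :=
    (ContinuousLinearMap.restrictScalarsL ℂ H H ℝ ℝ).hasFDerivAt.comp_hasDerivAt κ hK
  have hKphi : HasDerivAt (fun t => K t (φ₂ t)) (K' (φ₂ κ) + K κ v) κ := hKr.clm_apply hv
  set L : H →L[ℝ] ℂ := ((innerSL ℂ (φ₁ κ)).restrictScalars ℝ) with hL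
  have hF : HasDerivAt (fun t => (⟪φ₁ κ, K t (φ₂ t)⟫ : ℂ))
      (⟪φ₁ κ, K' (φ₂ κ)⟫ + ⟪φ₁ κ, K κ v⟫) κ := by
    have := L.hasFDerivAt.comp_hasDerivAt κ hKphi
    simpa [hL, inner_add_right, Function.comp_def] using this
  have hg : HasDerivAt (fun t => (⟪φ₁ κ, G (φ₂ t)⟫ : ℂ)) ⟪φ₁ κ, G v⟫ κ := by
    have := (L.comp (G.restrictScalars ℝ)).hasFDerivAt.comp_hasDerivAt κ hv
    simpa [hL, Function.comp_def, ContinuousLinearMap.coe_comp'] using this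
  have hb : HasDerivAt (fun t => ((β₂ t : ℂ))) (((deriv β₂ κ : ℝ) : ℂ)) κ :=
    hβ₂.hasDerivAt.ofReal_comp
  have hF₂ : HasDerivAt (fun t => ((β₂ t : ℂ)) * ⟪φ₁ κ, G (φ₂ t)⟫)
      (((deriv β₂ κ : ℝ) : ℂ) * ⟪φ₁ κ, G (φ₂ κ)⟫ + (β₂ κ : ℂ) * ⟪φ₁ κ, G v⟫) κ := hb.mul hg
  have heqF : (fun t => ((β₂ t : ℂ)) * ⟪φ₁ κ, G (φ₂ t)⟫)
      =ᶠ[nhds κ] (fun t => (⟪φ₁ κ, K t (φ₂ t)⟫ : ℂ)) := by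
    filter_upwards [hs] with t ht
    rw [heq₂ t ht, inner_smul_right]
  have huniq : ⟪φ₁ κ, K' (φ₂ κ)⟫ + ⟪φ₁ κ, K κ v⟫ =
      ((deriv β₂ κ : ℝ) : ℂ) * ⟪φ₁ κ, G (φ₂ κ)⟫ + (β₂ κ : ℂ) * ⟪φ₁ κ, G v⟫ :=
    hF.unique (hF₂.congr_of_eventuallyEq heqF.symm)
  have hKv : ⟪φ₁ κ, K κ v⟫ = (β₂ κ : ℂ) * ⟪φ₁ κ, G v⟫ := by
    rw [← hKsa κ, heq₁ κ hκs, inner_smul_left, Complex.conj_ofReal, hG, hcross]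
  have hG0 : (⟪φ₁ κ, G (φ₂ κ)⟫ : ℂ) = 0 := h0
  rw [hKv, hG0, mul_zero, zero_add] at huniq
  exact add_right_cancel (huniq.trans (zero_add _).symm)
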